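/- Let ρ > 0, a = ρ/(2√2), f_z(u) = (1/2) erfc(√2(z−u)), and define κ^ℝ(z,w) := √π e^{z²+w²} ( ∫_{−a}^{a} W(f_w, f_z)(u) du + f_w(a) f_z(−a) − f_z(a) f_w(−a) ), where W(f,g) = f g' − g f'. Then as ρ → ∞ (for fixed z,w ∈ ℂ), κ^ℝ(z,w) converges to κ^W(z,w) := √π e^{z²+w²} ∫_{−∞}^{∞} W(f_w, f_z)(u) du. -/

import Mathlib

open Complex intervalIntegral MeasureTheory Filter Metric

/-- The error function, extended to an entire function of a complex variable. -/
noncomputable def cerf (z : ℂ) : ℂ :=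
  (2 / Real.sqrt Real.pi) * z * ∫ s in (0:ℝ)..1, Complex.exp (-((s:ℂ) * z)^2)

lemma norm_cexp_neg_sq (v : ℂ) :
    ‖Complex.exp (-v^2)‖ = Real.exp (v.im^2 - v.re^2) := by
  rw [Complex.norm_exp]
  congr 1
  simp [pow_two, Complex.mul_re]

lemma hasDerivAt_cerf (z : ℂ) :
    HasDerivAt cerf ((2 / Real.sqrt Real.pi) * Complex.exp (-z^2)) z := by
  have hrw : cerf = fun z : ℂ => ∫ s in (0:ℝ)..1,
      (2 / Real.sqrt Real.pi : ℂ) * (z * Complex.exp (-((s:ℂ) * z)^2)) := by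
    funext ζ
    rw [cerf, ← intervalIntegral.integral_const_mul]
    congr 1; funext s; ring
  rw [hrw]
  set c : ℂ := (2 / Real.sqrt Real.pi : ℂ)
  set F' : ℂ → ℝ → ℂ := fun ζ s =>
    c * ((1 - 2 * (s:ℂ)^2 * ζ^2) * Complex.exp (-((s:ℂ) * ζ)^2)) with hF'
  have hcont : ∀ ζ : ℂ, Continuous fun s : ℝ => c * ((ζ:ℂ) * Complex.exp (-((s:ℂ) * ζ)^2)) := by
    intro ζ; fun_prop
  have key := intervalIntegral.hasDerivAt_integral_of_dominated_loc_of_deriv_le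
    (F := fun ζ : ℂ => fun s : ℝ => c * (ζ * Complex.exp (-((s:ℂ) * ζ)^2)))
    (F' := F') (x₀ := z) (a := (0:ℝ)) (b := 1) (μ := MeasureTheory.volume)
    (bound := fun _ : ℝ => ‖c‖ * ((1 + 2 * (‖z‖+1)^2) * Real.exp ((‖z‖+1)^2)))
    (ball_mem_nhds z one_pos)
    (Filter.Eventually.of_forall fun ζ => ((hcont ζ).aestronglyMeasurable))
    ((hcont z).intervalIntegrable 0 1)
    (by apply Continuous.aestronglyMeasurable; fun_prop)
    (by
      refine Filter.Eventually.of_forall fun s hs ζ hζ => ?_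
      have hs' : s ∈ Set.Ioc (0:ℝ) 1 := by
        simpa [Set.uIoc_of_le (zero_le_one)] using hs
      have hζn : ‖ζ‖ ≤ ‖z‖ + 1 := by
        have h := mem_ball_iff_norm.mp hζ
        calc ‖ζ‖ = ‖z + (ζ - z)‖ := by ring_nf
        _ ≤ ‖z‖ + ‖ζ - z‖ := norm_add_le _ _
        _ ≤ ‖z‖ + 1 := by linarith
      have h1 : ‖(s:ℂ)‖ ≤ 1 := by
        rw [Complex.norm_real, Real.norm_eq_abs, abs_of_pos hs'.1]
        exact hs'.2
      rw [hF']
      simp only [norm_mul]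
      gcongr
      · calc ‖1 - 2 * (s:ℂ)^2 * ζ^2‖ ≤ ‖(1:ℂ)‖ + ‖2 * (s:ℂ)^2 * ζ^2‖ := norm_sub_le _ _
          _ ≤ 1 + 2 * (‖z‖+1)^2 := by
              rw [norm_one]
              gcongr
              rw [norm_mul, norm_mul]
              simp only [Complex.norm_ofNat, norm_pow]
              calc 2 * ‖(s:ℂ)‖^2 * ‖ζ‖^2 ≤ 2 * 1^2 * (‖z‖+1)^2 := by
                    gcongr
                _ = 2 * (‖z‖+1)^2 := by ring
      · rw [norm_cexp_neg_sq]
        apply Real.exp_le_exp.mpr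
        have him : ((s:ℂ) * ζ).im^2 ≤ ‖(s:ℂ)*ζ‖^2 := by
          have h := Complex.abs_im_le_norm ((s:ℂ)*ζ)
          calc ((s:ℂ) * ζ).im^2 = |((s:ℂ)*ζ).im|^2 := (_root_.sq_abs _).symm
            _ ≤ ‖(s:ℂ)*ζ‖^2 := by gcongr
        have hprod : ‖(s:ℂ)*ζ‖^2 ≤ (‖z‖+1)^2 := by
          rw [norm_mul]
          calc (‖(s:ℂ)‖ * ‖ζ‖)^2 ≤ (1 * (‖z‖+1))^2 := by
                have h2 : ‖(s:ℂ)‖ * ‖ζ‖ ≤ 1 * (‖z‖+1) :=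
                  mul_le_mul h1 hζn (norm_nonneg _) zero_le_one
                have hnn : (0:ℝ) ≤ ‖(s:ℂ)‖ * ‖ζ‖ := by positivity
                exact pow_le_pow_left₀ hnn h2 2
            _ = (‖z‖+1)^2 := by ring
        nlinarith [sq_nonneg (((s:ℂ))*ζ).re])
    (intervalIntegrable_const)
    (by
      refine Filter.Eventually.of_forall fun s _ ζ _ => ?_
      rw [hF']
      have he : HasDerivAt (fun ζ : ℂ => Complex.exp (-((s:ℂ) * ζ)^2))
          (Complex.exp (-((s:ℂ) * ζ)^2) * (-(2 * (s:ℂ)^2 * ζ))) ζ := by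
        have hinner : HasDerivAt (fun ζ : ℂ => -((s:ℂ) * ζ)^2) (-(2 * (s:ℂ)^2 * ζ)) ζ := by
          have h := (((hasDerivAt_id ζ).const_mul ((s:ℂ))).pow 2).neg
          refine h.congr_deriv ?_
          simp only [id_eq]
          ring
        exact hinner.cexp
      have h1 := ((hasDerivAt_id ζ).mul he)
      have h1' : HasDerivAt (fun ζ : ℂ => ζ * Complex.exp (-((s:ℂ) * ζ)^2))
          ((1 - 2 * (s:ℂ)^2 * ζ^2) * Complex.exp (-((s:ℂ) * ζ)^2)) ζ := by
        refine h1.congr_deriv ?_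
        simp only [id]
        ring
      exact h1'.const_mul c)
  obtain ⟨-, hd⟩ := key
  refine hd.congr_deriv ?_
  have heval : (∫ s in (0:ℝ)..1, F' z s) = c * Complex.exp (-z^2) := by
    rw [hF', intervalIntegral.integral_const_mul]
    congr 1
    have hftc : ∀ s ∈ Set.uIcc (0:ℝ) 1,
        HasDerivAt (fun s : ℝ => (s:ℂ) * Complex.exp (-((s:ℂ) * z)^2))
          ((1 - 2 * (s:ℂ)^2 * z^2) * Complex.exp (-((s:ℂ) * z)^2)) s := by
      intro s _
      have hC : HasDerivAt (fun ζ : ℂ => ζ * Complex.exp (-(ζ * z)^2))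
          ((1 - 2 * (s:ℂ)^2 * z^2) * Complex.exp (-((s:ℂ) * z)^2)) (s:ℂ) := by
        have he : HasDerivAt (fun ζ : ℂ => Complex.exp (-(ζ * z)^2))
            (Complex.exp (-((s:ℂ) * z)^2) * (-(2 * z^2 * (s:ℂ)))) (s:ℂ) := by
          have hinner : HasDerivAt (fun ζ : ℂ => -(ζ * z)^2) (-(2 * z^2 * (s:ℂ))) (s:ℂ) := by
            have h := (((hasDerivAt_id ((s:ℂ))).mul_const z).pow 2).neg
            refine h.congr_deriv ?_
            simp only [id_eq]
            ring
          exact hinner.cexp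
        have h := (hasDerivAt_id ((s:ℂ))).mul he
        refine h.congr_deriv ?_
        simp only [id]
        ring
      exact hC.comp_ofReal
    rw [intervalIntegral.integral_eq_sub_of_hasDerivAt hftc (by
      apply Continuous.intervalIntegrable
      fun_prop)]
    norm_num
  rw [heval]

lemma cerf_zero : cerf 0 = 0 := by simp [cerf]

lemma cerf_neg (z : ℂ) : cerf (-z) = - cerf z := by
  simp only [cerf, mul_neg, neg_sq]
  ring

lemma differentiable_cerf : Differentiable ℂ cerf :=
  fun z => (hasDerivAt_cerf z).differentiableAt

lemma continuous_cerf : Continuous cerf := differentiable_cerf.continuous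

lemma norm_cexp_shift (v : ℂ) (t : ℝ) :
    ‖Complex.exp (-(v + t)^2)‖ = Real.exp (v.im^2) * Real.exp (-(t + v.re)^2) := by
  rw [norm_cexp_neg_sq, ← Real.exp_add]
  congr 1
  simp only [Complex.add_im, Complex.add_re, Complex.ofReal_im, Complex.ofReal_re]
  ring

lemma integrable_cexp_shift (v : ℂ) :
    MeasureTheory.Integrable (fun t : ℝ => Complex.exp (-(v + t)^2)) := by
  have hint : MeasureTheory.Integrable (fun t : ℝ => Real.exp (-(t + v.re)^2)) := by
    have h := integrable_exp_neg_mul_sq (b := 1) one_pos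
    have h2 := h.comp_add_right v.re
    simpa using h2
  apply MeasureTheory.Integrable.mono'
    ((hint.const_mul (Real.exp (v.im^2))))
    (by apply Continuous.aestronglyMeasurable; fun_prop)
  filter_upwards with t
  rw [norm_cexp_shift]

noncomputable def cerfTail (v : ℂ) : ℂ := ∫ t in Set.Ioi (0:ℝ), Complex.exp (-(v + t)^2)

lemma integrable_bound_aux (K B : ℝ) :
    MeasureTheory.Integrable (fun t : ℝ => K * Real.exp (-t^2 + B*t)) := by
  have h : MeasureTheory.Integrable (fun t : ℝ => Real.exp (-(t - B/2)^2)) := by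
    have h0 := integrable_exp_neg_mul_sq (b := 1) one_pos
    have h2 := h0.comp_sub_right (B/2)
    simpa using h2
  have h3 := (h.const_mul (Real.exp (B^2/4))).const_mul K
  apply h3.congr
  filter_upwards with t
  rw [← Real.exp_add]
  congr 2
  ring

lemma hasDerivAt_cerfTail (v : ℂ) :
    HasDerivAt cerfTail (-Complex.exp (-v^2)) v := by
  classical
  set F : ℂ → ℝ → ℂ := fun x t => Complex.exp (-(x + t)^2) with hF
  set F' : ℂ → ℝ → ℂ := fun x t => (-2 * (x + t)) * Complex.exp (-(x + t)^2) with hF'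
  set K : ℝ := 2 * (‖v‖ + 1) * Real.exp ((|v.im| + 1)^2) with hK
  set B : ℝ := 2 * (|v.re| + 1) + 1 with hB
  have hd : ∀ (x : ℂ) (t : ℝ), HasDerivAt (fun x => F x t) (F' x t) x := by
    intro x t
    have hinner : HasDerivAt (fun x : ℂ => -(x + t)^2) (-2 * (x + t)) x := by
      have h := (((hasDerivAt_id x).add_const ((t:ℂ))).pow 2).neg
      refine h.congr_deriv ?_
      simp only [id_eq]
      ring
    have := hinner.cexp
    rw [hF']
    refine this.congr_deriv ?_
    ring
  have key := _root_.hasDerivAt_integral_of_dominated_loc_of_deriv_le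
    (F := F) (F' := F') (x₀ := v) (μ := MeasureTheory.volume.restrict (Set.Ioi (0:ℝ)))
    (bound := fun t : ℝ => K * Real.exp (-t^2 + B*t))
    (ball_mem_nhds v one_pos)
    (Filter.Eventually.of_forall fun x =>
      (Continuous.aestronglyMeasurable (by rw [hF]; fun_prop)))
    ((integrable_cexp_shift v).integrableOn)
    (Continuous.aestronglyMeasurable (by rw [hF']; fun_prop))
    (by
      rw [MeasureTheory.ae_restrict_iff' measurableSet_Ioi]
      filter_upwards with t ht x hx
      have ht0 : (0:ℝ) < t := ht
      have hxv : ‖x - v‖ ≤ 1 := le_of_lt (mem_ball_iff_norm.mp hx)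
      have hxn : ‖x‖ ≤ ‖v‖ + 1 := by
        calc ‖x‖ = ‖v + (x - v)‖ := by ring_nf
          _ ≤ ‖v‖ + ‖x - v‖ := norm_add_le _ _
          _ ≤ ‖v‖ + 1 := by linarith
      have him : |x.im| ≤ |v.im| + 1 := by
        have h1 : |x.im - v.im| ≤ ‖x - v‖ := by
          have := Complex.abs_im_le_norm (x - v)
          simpa using this
        calc |x.im| = |v.im + (x.im - v.im)| := by ring_nf
          _ ≤ |v.im| + |x.im - v.im| := abs_add_le _ _
          _ ≤ |v.im| + 1 := by linarith
      have hre : |x.re - v.re| ≤ 1 := by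
        have h1 : |x.re - v.re| ≤ ‖x - v‖ := by
          have := Complex.abs_re_le_norm (x - v)
          simpa using this
        linarith
      rw [hF', norm_mul]
      have h2 : ‖(-2 : ℂ) * (x + t)‖ ≤ 2 * (‖v‖ + 1) * Real.exp t := by
        rw [norm_mul]
        have : ‖(-2:ℂ)‖ = 2 := by norm_num
        rw [this]
        have hxt : ‖x + (t:ℂ)‖ ≤ (‖v‖ + 1) + t := by
          calc ‖x + (t:ℂ)‖ ≤ ‖x‖ + ‖(t:ℂ)‖ := norm_add_le _ _
            _ ≤ (‖v‖ + 1) + t := by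
                have : ‖(t:ℂ)‖ = |t| := by simp [Complex.norm_real]
                rw [this, abs_of_pos ht0]
                linarith
        have hexp : (‖v‖ + 1) + t ≤ (‖v‖ + 1) * Real.exp t := by
          nlinarith [norm_nonneg v, Real.exp_pos t, Real.add_one_le_exp t]
        calc 2 * ‖x + (t:ℂ)‖ ≤ 2 * ((‖v‖ + 1) + t) := by linarith
          _ ≤ 2 * ((‖v‖ + 1) * Real.exp t) := by linarith
          _ = 2 * (‖v‖ + 1) * Real.exp t := by ring
      have h3 : ‖Complex.exp (-(x + t)^2)‖ ≤
          Real.exp ((|v.im| + 1)^2) * Real.exp (-t^2 + 2*(|v.re| + 1)*t) := by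
        rw [norm_cexp_shift, ← Real.exp_add, ← Real.exp_add]
        apply Real.exp_le_exp.mpr
        have e1 : x.im^2 ≤ (|v.im| + 1)^2 := by
          have : x.im^2 = |x.im|^2 := (_root_.sq_abs _).symm
          rw [this]
          have : (0:ℝ) ≤ |v.im| + 1 := by positivity
          nlinarith [abs_nonneg x.im]
        have e2 : -(t + x.re)^2 ≤ -t^2 + 2*(|v.re| + 1)*t := by
          have hxre : x.re ≥ -(|v.re| + 1) := by
            have := abs_le.mp hre
            have := neg_abs_le v.re
            linarith
          nlinarith [sq_nonneg x.re]
        linarith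
      calc ‖(-2 : ℂ) * (x + ↑t)‖ * ‖Complex.exp (-(x + ↑t) ^ 2)‖
          ≤ (2 * (‖v‖ + 1) * Real.exp t) *
            (Real.exp ((|v.im| + 1)^2) * Real.exp (-t^2 + 2*(|v.re| + 1)*t)) := by
            apply mul_le_mul h2 h3 (norm_nonneg _) (by positivity)
        _ = 2 * (‖v‖ + 1) * (Real.exp t * (Real.exp ((|v.im| + 1)^2) *
              Real.exp (-t^2 + 2*(|v.re| + 1)*t))) := by ring
        _ = K * Real.exp (-t^2 + B*t) := by
            have hmerge : Real.exp t * (Real.exp ((|v.im| + 1)^2) *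
                  Real.exp (-t^2 + 2*(|v.re| + 1)*t))
                = Real.exp ((|v.im| + 1)^2) * Real.exp (-t^2 + (2*(|v.re| + 1)+1)*t) := by
              rw [← Real.exp_add, ← Real.exp_add, ← Real.exp_add]
              congr 1
              ring
            rw [hK, hB]
            linear_combination (2*(‖v‖+1)) * hmerge
    )
    ((integrable_bound_aux K B).integrableOn)
    (by
      filter_upwards with t x _
      exact hd x t)
  obtain ⟨hint', hderiv⟩ := key
  have heval : (∫ t in Set.Ioi (0:ℝ), F' v t) = -Complex.exp (-v^2) := by
    have hftc := MeasureTheory.integral_Ioi_of_hasDerivAt_of_tendsto'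
      (f := fun t : ℝ => Complex.exp (-(v + t)^2))
      (f' := fun t : ℝ => F' v t) (a := 0) (m := 0)
      (fun t _ => by
        have hC : HasDerivAt (fun x : ℂ => Complex.exp (-(v + x)^2))
            ((-2 * (v + (t:ℂ))) * Complex.exp (-(v + t)^2)) (t:ℂ) := by
          have hinner : HasDerivAt (fun x : ℂ => -(v + x)^2) (-2 * (v + (t:ℂ))) (t:ℂ) := by
            have h := (((hasDerivAt_id ((t:ℂ))).const_add v).pow 2).neg
            refine h.congr_deriv ?_
            simp only [id_eq]
            ring
          have := hinner.cexp
          refine this.congr_deriv ?_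
          ring
        exact hC.comp_ofReal)
      hint'
      (by
        rw [tendsto_zero_iff_norm_tendsto_zero]
        have : (fun t : ℝ => ‖Complex.exp (-(v + t)^2)‖)
            = fun t : ℝ => Real.exp (v.im^2) * Real.exp (-(t + v.re)^2) := by
          funext t; exact norm_cexp_shift v t
        rw [this]
        have hadd : Tendsto (fun t : ℝ => t + v.re) atTop atTop :=
          tendsto_atTop_add_const_right _ _ tendsto_id
        have hsq : Tendsto (fun t : ℝ => (t + v.re)^2) atTop atTop :=
          (tendsto_pow_atTop two_ne_zero).comp hadd
        have hneg : Tendsto (fun t : ℝ => -(t + v.re)^2) atTop atBot :=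
          tendsto_neg_atTop_atBot.comp hsq
        have h2 : Tendsto (fun t : ℝ => Real.exp (-(t + v.re)^2)) atTop (nhds 0) :=
          Real.tendsto_exp_atBot.comp hneg
        have h3 := h2.const_mul (Real.exp (v.im^2))
        simpa using h3)
    rw [hftc]
    simp [hF']
  rw [← heval]
  exact hderiv

lemma cerfTail_zero : cerfTail 0 = ((Real.sqrt Real.pi / 2 : ℝ) : ℂ) := by
  rw [cerfTail]
  have h : ∀ t : ℝ, Complex.exp (-((0:ℂ) + t)^2) = ((Real.exp (-1 * t^2) : ℝ) : ℂ) := by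
    intro t
    rw [Complex.ofReal_exp]
    congr 1
    push_cast
    ring
  simp_rw [h]
  have hg : ∫ t in Set.Ioi (0:ℝ), Real.exp (-1 * t^2) = Real.sqrt Real.pi / 2 := by
    rw [integral_gaussian_Ioi]
    norm_num
  rw [← hg]
  norm_cast

lemma cerf_add_tail (v : ℂ) :
    cerf v + (2 / Real.sqrt Real.pi) * cerfTail v = 1 := by
  set L : ℂ → ℂ := fun v => cerf v + (2 / Real.sqrt Real.pi) * cerfTail v with hL
  have hderiv : ∀ x : ℂ, HasDerivAt L 0 x := by
    intro x
    have h1 := (hasDerivAt_cerf x).add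
      ((hasDerivAt_cerfTail x).const_mul ((2 / Real.sqrt Real.pi : ℂ)))
    refine h1.congr_deriv ?_
    ring
  have hconst := is_const_of_deriv_eq_zero (𝕜 := ℂ) (f := L)
    (fun x => (hderiv x).differentiableAt) (fun x => (hderiv x).deriv) v 0
  have hpi : ((Real.sqrt Real.pi : ℝ) : ℂ) ≠ 0 :=
    Complex.ofReal_ne_zero.mpr (Real.sqrt_pos.mpr Real.pi_pos).ne'
  have hL0 : L 0 = 1 := by
    rw [hL]
    simp only [cerf_zero, cerfTail_zero, zero_add]
    rw [show ((Real.sqrt Real.pi / 2 : ℝ) : ℂ) = (Real.sqrt Real.pi : ℂ) / 2 by push_cast; ring]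
    field_simp
  calc L v = L 0 := hconst
    _ = 1 := hL0

lemma tendsto_cerf_add_atTop (v : ℂ) :
    Tendsto (fun a : ℝ => cerf (v + a)) atTop (nhds 1) := by
  have hshift : ∀ a : ℝ, cerf (v + a) =
      cerf v + (2 / Real.sqrt Real.pi) * ∫ t in (0:ℝ)..a, Complex.exp (-(v + t)^2) := by
    intro a
    have hftc : ∀ t ∈ Set.uIcc (0:ℝ) a,
        HasDerivAt (fun t : ℝ => cerf (v + t))
          ((2 / Real.sqrt Real.pi) * Complex.exp (-(v + t)^2)) t := by
      intro t _
      have hC : HasDerivAt (fun x : ℂ => cerf (v + x))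
          ((2 / Real.sqrt Real.pi) * Complex.exp (-(v + t)^2)) ((t:ℝ):ℂ) := by
        have hinner : HasDerivAt (fun x : ℂ => v + x) 1 ((t:ℝ):ℂ) :=
          (hasDerivAt_id _).const_add v
        have h := (hasDerivAt_cerf (v + t)).comp ((t:ℝ):ℂ) hinner
        simpa [Function.comp_def] using h
      exact hC.comp_ofReal
    have hint := intervalIntegral.integral_eq_sub_of_hasDerivAt hftc
      (Continuous.intervalIntegrable (by fun_prop) 0 a)
    rw [← intervalIntegral.integral_const_mul, hint]
    push_cast
    ring
  have hlim : Tendsto (fun a : ℝ => ∫ t in (0:ℝ)..a, Complex.exp (-(v + t)^2)) atTop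
      (nhds (cerfTail v)) :=
    MeasureTheory.intervalIntegral_tendsto_integral_Ioi 0
      ((integrable_cexp_shift v).integrableOn) tendsto_id
  have h2 := (hlim.const_mul ((2 / Real.sqrt Real.pi : ℂ))).const_add (cerf v)
  rw [cerf_add_tail v] at h2
  exact h2.congr (fun a => (hshift a).symm)

/-- The complementary error function `erfc z = 1 − erf z`, entire in `z`. -/
noncomputable def cerfc (z : ℂ) : ℂ := 1 - cerf z

/-- `f_z(u) = (1/2) erfc(√2(z−u))`, as a function of a real variable `u`. -/
noncomputable def fz (z : ℂ) (u : ℝ) : ℂ := (1/2) * cerfc (Real.sqrt 2 * (z - (u:ℂ)))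

lemma fz_eq (z : ℂ) : fz z = fun u : ℝ =>
    (1/2 : ℂ) * (1 - cerf ((Real.sqrt 2 : ℂ) * (z - (u:ℂ)))) := by
  funext u
  rw [fz, cerfc]

lemma tendsto_fz_atBot (z : ℂ) : Tendsto (fz z) atBot (nhds 0) := by
  have h1 : Tendsto (fun u : ℝ => Real.sqrt 2 * (-u)) atBot atTop :=
    Filter.Tendsto.const_mul_atTop (Real.sqrt_pos.mpr two_pos) tendsto_neg_atBot_atTop
  have h2 := (tendsto_cerf_add_atTop ((Real.sqrt 2 : ℂ) * z)).comp h1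
  have key : Tendsto (fun u : ℝ => cerf ((Real.sqrt 2 : ℂ) * (z - (u:ℂ)))) atBot (nhds 1) := by
    apply h2.congr
    intro u
    simp only [Function.comp_apply]
    congr 1
    push_cast
    ring
  rw [fz_eq]
  have h3 := (key.const_sub 1).const_mul ((1/2 : ℂ))
  simpa using h3

lemma tendsto_fz_atTop (z : ℂ) : Tendsto (fz z) atTop (nhds 1) := by
  have h1 : Tendsto (fun u : ℝ => Real.sqrt 2 * u) atTop atTop :=
    Filter.Tendsto.const_mul_atTop (Real.sqrt_pos.mpr two_pos) tendsto_id
  have h2 := (tendsto_cerf_add_atTop (-(Real.sqrt 2 : ℂ) * z)).comp h1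
  have key : Tendsto (fun u : ℝ => cerf ((Real.sqrt 2 : ℂ) * (z - (u:ℂ)))) atTop (nhds (-1)) := by
    have h3 := h2.neg
    apply h3.congr
    intro u
    simp only [Function.comp_apply]
    rw [← cerf_neg]
    congr 1
    push_cast
    ring
  rw [fz_eq]
  have h3 := (key.const_sub 1).const_mul ((1/2 : ℂ))
  have : (1/2 : ℂ) * (1 - (-1)) = 1 := by norm_num
  rw [this] at h3
  exact h3

lemma sqrt_two_sq : ((Real.sqrt 2 : ℝ) : ℂ)^2 = 2 := by
  rw [← Complex.ofReal_pow, Real.sq_sqrt (by norm_num : (0:ℝ) ≤ 2)]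
  norm_num

lemma hasDerivAt_fz (z : ℂ) (u : ℝ) :
    HasDerivAt (fz z)
      ((Real.sqrt 2 : ℂ) / (Real.sqrt Real.pi) * Complex.exp (-2*(z - (u:ℂ))^2)) u := by
  rw [fz_eq]
  have hC : HasDerivAt (fun x : ℂ => (1/2 : ℂ) * (1 - cerf ((Real.sqrt 2:ℂ) * (z - x))))
      ((Real.sqrt 2 : ℂ) / (Real.sqrt Real.pi) * Complex.exp (-2*(z - (u:ℂ))^2)) ((u:ℝ):ℂ) := by
    have hinner : HasDerivAt (fun x : ℂ => (Real.sqrt 2:ℂ) * (z - x))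
        (-(Real.sqrt 2 : ℂ)) ((u:ℝ):ℂ) := by
      have h := ((hasDerivAt_id ((u:ℝ):ℂ)).const_sub z).const_mul ((Real.sqrt 2:ℂ))
      refine h.congr_deriv ?_
      ring
    have hcomp := (hasDerivAt_cerf ((Real.sqrt 2:ℂ)*(z - (u:ℂ)))).comp ((u:ℝ):ℂ) hinner
    have h4 := (hcomp.const_sub 1).const_mul ((1/2 : ℂ))
    refine h4.congr_deriv ?_
    have h5 : -((Real.sqrt 2:ℂ)*(z - (u:ℂ)))^2 = -2*(z - (u:ℂ))^2 := by
      rw [mul_pow, sqrt_two_sq]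
      ring
    rw [h5]
    have hpi : ((Real.sqrt Real.pi : ℝ) : ℂ) ≠ 0 :=
      Complex.ofReal_ne_zero.mpr (Real.sqrt_pos.mpr Real.pi_pos).ne'
    field_simp
  exact hC.comp_ofReal

lemma continuous_fz (z : ℂ) : Continuous (fz z) := by
  rw [fz_eq]
  apply continuous_const.mul
  apply continuous_const.sub
  apply continuous_cerf.comp
  fun_prop

/-- The Wronskian `W(f_w, f_z)(u) = f_w(u) f_z'(u) − f_z(u) f_w'(u)` (derivatives in `u`). -/
noncomputable def Wr (z w : ℂ) (u : ℝ) : ℂ :=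
  fz w u * deriv (fz z) u - fz z u * deriv (fz w) u

lemma Wr_eq (z w : ℂ) (u : ℝ) :
    Wr z w u = (Real.sqrt 2 : ℂ) / (Real.sqrt Real.pi) *
      (fz w u * Complex.exp (-2*(z - (u:ℂ))^2) - fz z u * Complex.exp (-2*(w - (u:ℂ))^2)) := by
  rw [Wr, (hasDerivAt_fz z u).deriv, (hasDerivAt_fz w u).deriv]
  ring

lemma continuous_Wr (z w : ℂ) : Continuous (Wr z w) := by
  have h : Wr z w = fun u : ℝ => (Real.sqrt 2 : ℂ) / (Real.sqrt Real.pi) *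
      (fz w u * Complex.exp (-2*(z - (u:ℂ))^2) - fz z u * Complex.exp (-2*(w - (u:ℂ))^2)) :=
    funext (Wr_eq z w)
  rw [h]
  apply continuous_const.mul
  apply Continuous.sub
  · exact (continuous_fz w).mul (by fun_prop)
  · exact (continuous_fz z).mul (by fun_prop)

lemma exists_bound_fz (z : ℂ) : ∃ C : ℝ, ∀ u : ℝ, ‖fz z u‖ ≤ C := by
  have h1 : ∀ᶠ u in atTop, ‖fz z u‖ < 2 :=
    ((tendsto_fz_atTop z).norm).eventually_lt_const (by norm_num)
  have h2 : ∀ᶠ u in atBot, ‖fz z u‖ < 2 :=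
    ((tendsto_fz_atBot z).norm).eventually_lt_const (by norm_num)
  obtain ⟨N1, hN1⟩ := eventually_atTop.mp h1
  obtain ⟨N2, hN2⟩ := eventually_atBot.mp h2
  obtain ⟨C0, hC0⟩ := (isCompact_Icc (a := N2) (b := N1)).exists_bound_of_continuousOn
    (continuous_fz z).continuousOn
  refine ⟨max 2 C0, fun u => ?_⟩
  rcases le_or_gt u N1 with h | h
  · rcases le_or_gt N2 u with h' | h'
    · exact (hC0 u ⟨h', h⟩).trans (le_max_right _ _)
    · exact ((hN2 u h'.le).le).trans (le_max_left _ _)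
  · exact ((hN1 u h.le).le).trans (le_max_left _ _)

lemma norm_cexp_neg_two_sq (z : ℂ) (u : ℝ) :
    ‖Complex.exp (-2*(z - (u:ℂ))^2)‖
      = Real.exp (2*z.im^2) * Real.exp (-2*(u - z.re)^2) := by
  have h5 : -2*(z - (u:ℂ))^2 = -((Real.sqrt 2:ℂ)*(z - (u:ℂ)))^2 := by
    rw [mul_pow, sqrt_two_sq]
    ring
  rw [h5, norm_cexp_neg_sq, ← Real.exp_add]
  congr 1
  have h2 : (0:ℝ) ≤ 2 := by norm_num
  simp only [Complex.mul_im, Complex.mul_re, Complex.ofReal_re, Complex.ofReal_im,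
    Complex.sub_re, Complex.sub_im]
  rw [show (Real.sqrt 2) * (z.re - u) - 0 * (z.im - 0) = Real.sqrt 2 * (z.re - u) by ring,
    show (Real.sqrt 2) * (z.im - 0) + 0 * (z.re - u) = Real.sqrt 2 * z.im by ring]
  rw [mul_pow, mul_pow, Real.sq_sqrt h2]
  ring

lemma integrable_Wr (z w : ℂ) : MeasureTheory.Integrable (Wr z w) := by
  obtain ⟨Cz, hCz⟩ := exists_bound_fz z
  obtain ⟨Cw, hCw⟩ := exists_bound_fz w
  have hCz0 : 0 ≤ Cz := le_trans (norm_nonneg _) (hCz 0)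
  have hCw0 : 0 ≤ Cw := le_trans (norm_nonneg _) (hCw 0)
  set k : ℝ := Real.sqrt 2 / Real.sqrt Real.pi with hk
  have hk0 : 0 ≤ k := by positivity
  have hgauss : ∀ c : ℝ, MeasureTheory.Integrable (fun u : ℝ => Real.exp (-2*(u - c)^2)) := by
    intro c
    have h := (integrable_exp_neg_mul_sq (b := 2) two_pos).comp_sub_right c
    simpa using h
  have hg : MeasureTheory.Integrable (fun u : ℝ =>
      k * (Cw * (Real.exp (2*z.im^2) * Real.exp (-2*(u - z.re)^2))
        + Cz * (Real.exp (2*w.im^2) * Real.exp (-2*(u - w.re)^2)))) := by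
    apply MeasureTheory.Integrable.const_mul
    exact ((((hgauss z.re).const_mul _).const_mul _).add
      (((hgauss w.re).const_mul _).const_mul _))
  apply MeasureTheory.Integrable.mono' hg (continuous_Wr z w).aestronglyMeasurable
  filter_upwards with u
  rw [Wr_eq, norm_mul]
  have hknorm : ‖(Real.sqrt 2 : ℂ) / (Real.sqrt Real.pi : ℂ)‖ = k := by
    rw [norm_div, hk]
    congr 1 <;>
      simp [Complex.norm_real, Real.norm_eq_abs, _root_.abs_of_nonneg (Real.sqrt_nonneg _)]
  rw [hknorm]
  apply mul_le_mul_of_nonneg_left _ hk0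
  calc ‖fz w u * Complex.exp (-2*(z - (u:ℂ))^2) - fz z u * Complex.exp (-2*(w - (u:ℂ))^2)‖
      ≤ ‖fz w u * Complex.exp (-2*(z - (u:ℂ))^2)‖
        + ‖fz z u * Complex.exp (-2*(w - (u:ℂ))^2)‖ := norm_sub_le _ _
    _ ≤ Cw * (Real.exp (2*z.im^2) * Real.exp (-2*(u - z.re)^2))
        + Cz * (Real.exp (2*w.im^2) * Real.exp (-2*(u - w.re)^2)) := by
        rw [norm_mul, norm_mul, norm_cexp_neg_two_sq, norm_cexp_neg_two_sq]
        apply add_le_add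
        · exact mul_le_mul_of_nonneg_right (hCw u) (by positivity)
        · exact mul_le_mul_of_nonneg_right (hCz u) (by positivity)

/-- The pre-kernel `κ^ℝ(z,w)`, with `a = ρ/(2√2)`. -/
noncomputable def kappaR (ρ : ℝ) (z w : ℂ) : ℂ :=
  (Real.sqrt Real.pi : ℂ) * Complex.exp (z^2 + w^2) *
    ((∫ u in (-(ρ/(2*Real.sqrt 2)))..(ρ/(2*Real.sqrt 2)), Wr z w u)
      + fz w (ρ/(2*Real.sqrt 2)) * fz z (-(ρ/(2*Real.sqrt 2)))
      - fz z (ρ/(2*Real.sqrt 2)) * fz w (-(ρ/(2*Real.sqrt 2))))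

/-- The bulk pre-kernel of the symplectic Ginibre ensemble. -/
noncomputable def kappaW (z w : ℂ) : ℂ :=
  (Real.sqrt Real.pi : ℂ) * Complex.exp (z^2 + w^2) * ∫ u : ℝ, Wr z w u

/-- As `ρ → ∞`, `κ^ℝ(z,w) → κ^W(z,w)` for fixed `z, w`. -/
theorem kappaR_tendsto_kappaW (z w : ℂ) :
    Tendsto (fun ρ : ℝ => kappaR ρ z w) atTop (nhds (kappaW z w)) := by
  have hA : Tendsto (fun ρ : ℝ => ρ / (2*Real.sqrt 2)) atTop atTop :=
    Filter.Tendsto.atTop_div_const (by positivity) tendsto_id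
  have hnA : Tendsto (fun ρ : ℝ => -(ρ / (2*Real.sqrt 2))) atTop atBot :=
    tendsto_neg_atTop_atBot.comp hA
  have hI : Tendsto (fun ρ : ℝ => ∫ u in (-(ρ/(2*Real.sqrt 2)))..(ρ/(2*Real.sqrt 2)), Wr z w u)
      atTop (nhds (∫ u : ℝ, Wr z w u)) :=
    MeasureTheory.intervalIntegral_tendsto_integral (integrable_Wr z w) hnA hA
  have h1 : Tendsto (fun ρ : ℝ => fz w (ρ/(2*Real.sqrt 2))) atTop (nhds 1) :=
    (tendsto_fz_atTop w).comp hA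
  have h2 : Tendsto (fun ρ : ℝ => fz z (-(ρ/(2*Real.sqrt 2)))) atTop (nhds 0) :=
    (tendsto_fz_atBot z).comp hnA
  have h3 : Tendsto (fun ρ : ℝ => fz z (ρ/(2*Real.sqrt 2))) atTop (nhds 1) :=
    (tendsto_fz_atTop z).comp hA
  have h4 : Tendsto (fun ρ : ℝ => fz w (-(ρ/(2*Real.sqrt 2)))) atTop (nhds 0) :=
    (tendsto_fz_atBot w).comp hnA
  have hB := (hI.add (h1.mul h2)).sub (h3.mul h4)
  have hC := hB.const_mul ((Real.sqrt Real.pi : ℂ) * Complex.exp (z^2 + w^2))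
  simp only [mul_zero, one_mul, add_zero, sub_zero, mul_one] at hC
  simpa only [kappaR, kappaW, mul_add, mul_sub] using hC
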